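/- Let $s_1 \ge s_2 \ge \cdots \ge s_n \ge 0$ be real numbers with $n \ge 2$, such that $s_1 \ge \sqrt{n-1}$ and $s_i s_j \le 1$ for all $i \ne j$. Then $\prod_{i=1}^n (1+s_i^2) \le 1 + s_1^2 + 2n$. -/

import Mathlib

/-- if `s 0 ≥ s 1 ≥ ⋯ ≥ s (n-1) ≥ 0` (`n ≥ 2`), `s 0 ≥ √(n-1)` and
`s i * s j ≤ 1` for `i ≠ j`, then `∏ (1 + sᵢ²) ≤ 1 + s₀² + 2n`. -/
theorem stmt_0 (n : ℕ) (hn : 2 ≤ n) (s : Fin n → ℝ)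
    (hnonneg : ∀ i, 0 ≤ s i)
    (hmono : ∀ i j : Fin n, i ≤ j → s j ≤ s i)
    (h1 : Real.sqrt ((n : ℝ) - 1) ≤ s ⟨0, by omega⟩)
    (hpair : ∀ i j : Fin n, i ≠ j → s i * s j ≤ 1) :
    ∏ i, (1 + s i ^ 2) ≤ 1 + s ⟨0, by omega⟩ ^ 2 + 2 * n := by
  set i0 : Fin n := ⟨0, by omega⟩ with hi0
  set m : ℕ := n - 1 with hm
  have hmcast : (m : ℝ) = (n : ℝ) - 1 := by
    rw [hm, Nat.cast_sub (by omega)]; simp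
  have hm1 : 1 ≤ m := by omega
  have hm1R : (1 : ℝ) ≤ m := by exact_mod_cast hm1
  have hm0R : (0 : ℝ) < m := by linarith
  have hn1 : (1 : ℝ) ≤ (n : ℝ) - 1 := by
    have : (2 : ℝ) ≤ n := by exact_mod_cast hn
    linarith
  have hs0 : 1 ≤ s i0 := by
    have h := Real.sqrt_le_sqrt hn1
    rw [Real.sqrt_one] at h
    exact h.trans h1
  set t := s i0 ^ 2 with hts
  have ht : (m : ℝ) ≤ t := by
    have hsq : Real.sqrt ((n : ℝ) - 1) ^ 2 = (n : ℝ) - 1 := Real.sq_sqrt (by linarith)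
    have : Real.sqrt ((n : ℝ) - 1) ^ 2 ≤ t := by
      apply pow_le_pow_left₀ (Real.sqrt_nonneg _) h1
    rw [hsq] at this; linarith [hmcast]
  have ht0 : (0 : ℝ) < t := by nlinarith
  set u : ℝ := 1 / t with hu
  have hu0 : 0 < u := by positivity
  set v : ℝ := 1 / (m : ℝ) with hv
  have hv0 : 0 < v := by positivity
  have huv : u ≤ v := by
    rw [hu, hv]
    exact one_div_le_one_div_of_le hm0R ht
  -- Step A: product over erase
  have hkey : ∀ i ∈ Finset.univ.erase i0, 1 + s i ^ 2 ≤ 1 + u := by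
    intro i hi
    have hne : i ≠ i0 := Finset.ne_of_mem_erase hi
    have hp := hpair i i0 hne
    have hsi := hnonneg i
    have : s i ^ 2 ≤ u := by
      rw [hu, le_div_iff₀ ht0]
      have h2 : 0 ≤ s i * s i0 := mul_nonneg hsi (by linarith)
      nlinarith [mul_le_mul hp hp h2 zero_le_one]
    linarith
  have hcard : (Finset.univ.erase i0).card = m := by
    rw [Finset.card_erase_of_mem (Finset.mem_univ i0), Finset.card_univ, Fintype.card_fin]
  have prodA : ∏ i ∈ Finset.univ.erase i0, (1 + s i ^ 2) ≤ (1 + u) ^ m := by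
    calc ∏ i ∈ Finset.univ.erase i0, (1 + s i ^ 2)
        ≤ ∏ _i ∈ Finset.univ.erase i0, (1 + u) :=
          Finset.prod_le_prod (fun i _ => by positivity) hkey
      _ = (1 + u) ^ m := by rw [Finset.prod_const, hcard]
  have hsplit : ∏ i, (1 + s i ^ 2) = (1 + t) * ∏ i ∈ Finset.univ.erase i0, (1 + s i ^ 2) :=
    (Finset.mul_prod_erase Finset.univ _ (Finset.mem_univ i0)).symm
  have htot : ∏ i, (1 + s i ^ 2) ≤ (1 + t) * (1 + u) ^ m := by
    rw [hsplit]
    exact mul_le_mul_of_nonneg_left prodA (by nlinarith)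
  -- Step B
  have hgeomu : (∑ j ∈ Finset.range m, (1 + u) ^ j) * u = (1 + u) ^ m - 1 := by
    have := geom_sum_mul (1 + u) m
    simpa using this
  have hgeomv : (∑ j ∈ Finset.range m, (1 + v) ^ j) * v = (1 + v) ^ m - 1 := by
    have := geom_sum_mul (1 + v) m
    simpa using this
  have htu : (1 + t) * u = 1 + u := by
    rw [hu]; field_simp; ring
  have hB1 : (1 + t) * ((1 + u) ^ m - 1) = ∑ j ∈ Finset.range m, (1 + u) ^ (j + 1) := by
    rw [← hgeomu]
    have : (1 + t) * ((∑ j ∈ Finset.range m, (1 + u) ^ j) * u)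
        = (1 + u) * ∑ j ∈ Finset.range m, (1 + u) ^ j := by
      rw [← htu]; ring
    rw [this, Finset.mul_sum]
    congr 1; ext j; ring
  have hsumle : ∑ j ∈ Finset.range m, (1 + u) ^ (j + 1)
      ≤ ∑ j ∈ Finset.range m, (1 + v) ^ (j + 1) := by
    apply Finset.sum_le_sum
    intro j _
    exact pow_le_pow_left₀ (by linarith) (by linarith) _
  have hsumv : ∑ j ∈ Finset.range m, (1 + v) ^ (j + 1)
      = ((m : ℝ) + 1) * ((1 + v) ^ m - 1) := by
    have h1' : ∑ j ∈ Finset.range m, (1 + v) ^ (j + 1)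
        = (1 + v) * ∑ j ∈ Finset.range m, (1 + v) ^ j := by
      rw [Finset.mul_sum]; congr 1; ext j; ring
    have h2' : ∑ j ∈ Finset.range m, (1 + v) ^ j = ((1 + v) ^ m - 1) * m := by
      have := hgeomv
      field_simp [hv] at this ⊢
      have hvm : v * (m : ℝ) = 1 := by rw [hv]; field_simp
      linear_combination (m : ℝ) * this - (∑ j ∈ Finset.range m, (1 + v) ^ j) * hvm
    rw [h1', h2']
    have : (1 + v) * (m : ℝ) = (m : ℝ) + 1 := by
      rw [hv]
      field_simp
    linear_combination ((1 + v) ^ m - 1) * this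
  have hexp : (1 + v) ^ m ≤ Real.exp 1 := by
    have h1' : 1 + v ≤ Real.exp v := by
      have := Real.add_one_le_exp v; linarith
    calc (1 + v) ^ m ≤ (Real.exp v) ^ m :=
          pow_le_pow_left₀ (by linarith) h1' _
      _ = Real.exp (v * m) := by rw [← Real.exp_nat_mul]; ring_nf
      _ = Real.exp 1 := by
          congr 1
          rw [hv, one_div, inv_mul_cancel₀ (ne_of_gt hm0R)]
  have hexpval : Real.exp 1 < 2.7182818286 := Real.exp_one_lt_d9
  have hfin : (1 + t) * ((1 + u) ^ m - 1) ≤ 2 * n := by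
    rw [hB1]
    have hnm : (m : ℝ) + 1 = n := by rw [hmcast]; ring
    calc ∑ j ∈ Finset.range m, (1 + u) ^ (j + 1)
        ≤ ∑ j ∈ Finset.range m, (1 + v) ^ (j + 1) := hsumle
      _ = ((m : ℝ) + 1) * ((1 + v) ^ m - 1) := hsumv
      _ ≤ ((m : ℝ) + 1) * (Real.exp 1 - 1) := by
          apply mul_le_mul_of_nonneg_left (by linarith) (by linarith)
      _ ≤ 2 * n := by nlinarith
  calc ∏ i, (1 + s i ^ 2) ≤ (1 + t) * (1 + u) ^ m := htot
    _ = (1 + t) + (1 + t) * ((1 + u) ^ m - 1) := by ring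
    _ ≤ 1 + t + 2 * n := by linarith
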